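/- Let H be a complex Hilbert space and D a densely defined self-adjoint operator on H. If a bounded operator x on H maps dom D into dom D and satisfies D(x h) = x(D h) for all h ∈ dom D (i.e., x ∈ ker δ^D_w), then its Hilbert-space adjoint x* also maps dom D into dom D and satisfies D(x* h) = x*(D h) for all h ∈ dom D (i.e., x* ∈ ker δ^D_w). In particular, ker δ^D_w is closed under the adjoint operation. -/

import Mathlib

open scoped InnerProductSpace

/-- **`ker δ^D_w` is closed under adjoints.** If a bounded operator `x` on a complex Hilbert
space preserves the domain of a densely defined self-adjoint operator `D` and commutes with `D`
on `dom D` (i.e. `x ∈ ker δ^D_w`), then the Hilbert-space adjoint `x*` also preserves `dom D`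
and commutes with `D` on `dom D` (i.e. `x* ∈ ker δ^D_w`). -/
theorem ker_weak_derivation_star_mem {H : Type*} [NormedAddCommGroup H]
    [InnerProductSpace ℂ H] [CompleteSpace H] (D : H →ₗ.[ℂ] H)
    (hdense : Dense (D.domain : Set H)) (hsa : D.adjoint = D) (x : H →L[ℂ] H)
    (hx : ∀ h : D.domain, x h ∈ D.domain)
    (hxD : ∀ h : D.domain, D ⟨x h, hx h⟩ = x (D h)) :
    ∀ h : D.domain, ∃ hm : ContinuousLinearMap.adjoint x h ∈ D.domain,
      D ⟨ContinuousLinearMap.adjoint x h, hm⟩ = ContinuousLinearMap.adjoint x (D h) := by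
  have hD : D.IsFormalAdjoint D := by
    have := LinearPMap.adjoint_isFormalAdjoint (T := D) hdense
    rwa [hsa] at this
  intro h
  -- key inner-product identity
  have key : ∀ u : D.domain, ⟪ContinuousLinearMap.adjoint x (D h), (u : H)⟫_ℂ
      = ⟪(ContinuousLinearMap.adjoint x h : H), D u⟫_ℂ := by
    intro u
    calc ⟪ContinuousLinearMap.adjoint x (D h), (u : H)⟫_ℂ
        = ⟪D h, x u⟫_ℂ := by rw [ContinuousLinearMap.adjoint_inner_left]
      _ = ⟪(h : H), D ⟨x u, hx u⟩⟫_ℂ := hD h ⟨x u, hx u⟩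
      _ = ⟪(h : H), x (D u)⟫_ℂ := by rw [hxD u]
      _ = ⟪(ContinuousLinearMap.adjoint x h : H), D u⟫_ℂ := by
          rw [ContinuousLinearMap.adjoint_inner_left]
  have hm' : ContinuousLinearMap.adjoint x h ∈ D.adjoint.domain :=
    D.mem_adjoint_domain_of_exists _ ⟨ContinuousLinearMap.adjoint x (D h), key⟩
  have hm : ContinuousLinearMap.adjoint x h ∈ D.domain := by rwa [hsa] at hm'
  refine ⟨hm, ?_⟩
  refine hdense.eq_of_inner_left ℂ fun u hu => ?_
  exact (hD ⟨_, hm⟩ ⟨u, hu⟩).trans (key ⟨u, hu⟩).symm
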